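/- Let Ω ⊆ ℝⁿ, f ∈ C¹(Ω, ℝⁿ), g ∈ C¹(Ω, ℝ^m), Q a positive definite m×m matrix, V ∈ C¹(Ω, ℝ) and C > 0 such that C·g(x)ᵀQg(x) − (Dg(x)f(x))ᵀQ(Dg(x)f(x)) + ∇V(x)·f(x) ≥ 0 for all x ∈ Ω. Then every T-periodic solution x(t) of x' = f(x) satisfying ∫₀^T g(x(t)) dt = 0 and ∫₀^T |g(x(t))|² dt ≠ 0 has T ≥ 2π/√C. -/

import Mathlib

open Matrix
open scoped Real
open MeasureTheory Complex
open scoped MatrixOrder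

open MeasureTheory Complex
open scoped Real

section wirt
variable {T : ℝ} [hT : Fact (0 < T)]

lemma my_summable_sq_fourierCoeff (G : C(AddCircle T, ℂ)) :
    Summable fun n : ℤ => ‖fourierCoeff (⇑G) n‖ ^ 2 := by
  classical
  set f := ContinuousMap.toLp (E := ℂ) 2 AddCircle.haarAddCircle ℂ G with hf
  have hm : Memℓp (fun n => fourierBasis.repr f n) 2 := lp.memℓp (fourierBasis.repr f)
  have hs : Summable fun n : ℤ => ‖fourierBasis.repr f n‖ ^ (ENNReal.toReal 2) :=
    (memℓp_gen_iff (by norm_num)).mp hm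
  have hs2 : Summable fun n : ℤ => ‖fourierBasis.repr f n‖ ^ 2 := by
    refine hs.congr fun n => ?_
    rw [ENNReal.toReal_ofNat]
    rw [show ((2:ℝ)) = ((2:ℕ):ℝ) by norm_num, Real.rpow_natCast]
  refine hs2.congr fun n => ?_
  rw [fourierBasis_repr, hf, fourierCoeff_toLp]

lemma my_parseval (G : C(AddCircle T, ℂ)) :
    ∑' n : ℤ, ‖fourierCoeff (⇑G) n‖ ^ 2
      = ∫ t : AddCircle T, ‖G t‖ ^ 2 ∂AddCircle.haarAddCircle := by
  classical
  set f := ContinuousMap.toLp (E := ℂ) 2 AddCircle.haarAddCircle ℂ G with hf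
  have h1 := tsum_sq_fourierCoeff f
  have h2 : ∀ n, fourierCoeff (f : AddCircle T → ℂ) n = fourierCoeff (⇑G) n := by
    intro n; rw [hf, fourierCoeff_toLp]
  have h3 : ∫ t : AddCircle T, ‖f t‖ ^ 2 ∂AddCircle.haarAddCircle
      = ∫ t : AddCircle T, ‖G t‖ ^ 2 ∂AddCircle.haarAddCircle := by
    refine integral_congr_ae ?_
    filter_upwards [ContinuousMap.coeFn_toLp (p := 2) (𝕜 := ℂ) AddCircle.haarAddCircle G] with t ht
    rw [ht]
  simp_rw [h2] at h1
  rw [← h3, h1]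

end wirt

lemma wirtinger_aux {T : ℝ} (hT : 0 < T) (u u' : ℝ → ℂ)
    (hu : ∀ t, HasDerivAt u (u' t) t) (hu' : Continuous u')
    (hper : ∀ t, u (t + T) = u t)
    (hmean : (∫ t in (0:ℝ)..T, u t) = 0) :
    (2 * π / T) ^ 2 * ∫ t in (0:ℝ)..T, ‖u t‖ ^ 2 ≤ ∫ t in (0:ℝ)..T, ‖u' t‖ ^ 2 := by
  haveI hTf : Fact (0 < T) := ⟨hT⟩
  have hucont : Continuous u := continuous_iff_continuousAt.mpr fun t => (hu t).continuousAt
  have hu'per : ∀ t, u' (t + T) = u' t := by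
    intro t
    have hid : HasDerivAt (fun s : ℝ => s + T) 1 t := by
      simpa using (hasDerivAt_id t).add_const T
    have h1 := HasDerivAt.scomp (𝕜 := ℝ) t (hu (t + T)) hid
    rw [show u ∘ (fun s : ℝ => s + T) = u from funext hper, one_smul] at h1
    exact h1.unique (hu t)
  have hu0T : u 0 = u T := by have := hper 0; rw [zero_add] at this; exact this.symm
  have hu'0T : u' 0 = u' T := by have := hu'per 0; rw [zero_add] at this; exact this.symm
  set F : AddCircle T → ℂ := AddCircle.liftIco T 0 u with hFdef
  set F' : AddCircle T → ℂ := AddCircle.liftIco T 0 u' with hF'def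
  have hFc : Continuous F := AddCircle.liftIco_zero_continuous hu0T hucont.continuousOn
  have hF'c : Continuous F' := AddCircle.liftIco_zero_continuous hu'0T hu'.continuousOn
  have hcoe : ∀ t ∈ Set.Ico (0:ℝ) T, F ↑t = u t := fun t ht =>
    AddCircle.liftIco_zero_coe_apply ht
  have hcoe' : ∀ t ∈ Set.Ico (0:ℝ) T, F' ↑t = u' t := fun t ht =>
    AddCircle.liftIco_zero_coe_apply ht
  have haeT : ∀ᵐ t : ℝ, t ≠ T := by
    have hs : {t : ℝ | ¬ t ≠ T} = {T} := by ext t; simp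
    rw [MeasureTheory.ae_iff, hs]
    exact measure_singleton T
  have hcongr : ∀ (w : ℝ → ℂ) (W : AddCircle T → ℂ), (∀ t ∈ Set.Ico (0:ℝ) T, W ↑t = w t) →
      ∀ (φ : ℂ → ℝ), ∫ t in (0:ℝ)..T, φ (w t) = ∫ t in (0:ℝ)..T, φ (W ↑t) := by
    intro w W hWw φ
    refine intervalIntegral.integral_congr_ae ?_
    filter_upwards [haeT] with t htT hmem
    rw [Set.uIoc_of_le hT.le] at hmem
    have hmem' : t ∈ Set.Ico (0:ℝ) T := ⟨hmem.1.le, lt_of_le_of_ne hmem.2 htT⟩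
    rw [hWw t hmem']
  have hnormint : ∀ (w : ℝ → ℂ) (W : AddCircle T → ℂ), (∀ t ∈ Set.Ico (0:ℝ) T, W ↑t = w t) →
      ∫ t in (0:ℝ)..T, ‖w t‖ ^ 2
        = T * ∫ x : AddCircle T, ‖W x‖ ^ 2 ∂AddCircle.haarAddCircle := by
    intro w W hWw
    have e1 := hcongr w W hWw (fun z => ‖z‖ ^ 2)
    have e2 := AddCircle.intervalIntegral_preimage T 0 (fun x => ‖W x‖ ^ 2)
    rw [zero_add] at e2
    rw [e1, e2, AddCircle.volume_eq_smul_haarAddCircle, MeasureTheory.integral_smul_measure,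
      ENNReal.toReal_ofReal hT.le, smul_eq_mul]
  -- zero-th coefficient vanishes
  have hc0 : fourierCoeff F 0 = 0 := by
    have h := fourierCoeff_eq_intervalIntegral F 0 0
    rw [zero_add] at h
    simp only [neg_zero, fourier_zero, one_smul] at h
    have e : ∫ t in (0:ℝ)..T, F ↑t = ∫ t in (0:ℝ)..T, u t := by
      refine intervalIntegral.integral_congr_ae ?_
      filter_upwards [haeT] with t htT hmem
      rw [Set.uIoc_of_le hT.le] at hmem
      exact hcoe t ⟨hmem.1.le, lt_of_le_of_ne hmem.2 htT⟩
    rw [h, e, hmean, smul_zero]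
  -- relation between coefficients of u and u'
  have hab : (0:ℝ) < 0 + T := by linarith
  have hcF : ∀ n, fourierCoeff F n = fourierCoeffOn hab u n := fun n =>
    fourierCoeff_liftIco_eq u n
  have hcF' : ∀ n, fourierCoeff F' n = fourierCoeffOn hab u' n := fun n =>
    fourierCoeff_liftIco_eq u' n
  have hrel : ∀ n : ℤ, n ≠ 0 →
      (2 * π / T) * ‖fourierCoeff F n‖ ≤ ‖fourierCoeff F' n‖ := by
    intro n hn
    have heq := fourierCoeffOn_of_hasDerivAt hab hn (f := u) (f' := u')
      (fun t _ => hu t) (hu'.intervalIntegrable 0 (0 + T))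
    rw [← hcF n, ← hcF' n, hper 0, sub_self, mul_zero, zero_sub, zero_add,
      Complex.ofReal_zero, sub_zero] at heq
    have hπ : ((π:ℝ):ℂ) ≠ 0 := Complex.ofReal_ne_zero.mpr Real.pi_ne_zero
    have hnC : ((n:ℤ):ℂ) ≠ 0 := Int.cast_ne_zero.mpr hn
    have h2 : (-2 * (π:ℂ) * Complex.I * n) * fourierCoeff F n
        = -(T : ℂ) * fourierCoeff F' n := by
      rw [heq]; field_simp
    have hnl : ‖(-2 * (π:ℂ) * Complex.I * n)‖ = 2 * π * |(n:ℝ)| := by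
      simp [norm_mul, abs_of_pos Real.pi_pos]
    have hnr : ‖(-(T:ℂ)) * fourierCoeff F' n‖ = T * ‖fourierCoeff F' n‖ := by
      rw [norm_mul]; simp [abs_of_pos hT]
    have h3 := congrArg norm h2
    rw [norm_mul, hnl, hnr] at h3
    have hn1 : (1:ℝ) ≤ |(n:ℝ)| := by exact_mod_cast Int.one_le_abs hn
    rw [div_mul_eq_mul_div, div_le_iff₀ hT]
    nlinarith [norm_nonneg (fourierCoeff F n), norm_nonneg (fourierCoeff F' n), Real.pi_pos,
      mul_nonneg (mul_nonneg (by positivity : (0:ℝ) ≤ 2 * π) (sub_nonneg.mpr hn1))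
        (norm_nonneg (fourierCoeff F n))]
  have hsq : ∀ n : ℤ,
      (2 * π / T) ^ 2 * ‖fourierCoeff F n‖ ^ 2 ≤ ‖fourierCoeff F' n‖ ^ 2 := by
    intro n
    rcases eq_or_ne n 0 with rfl | hn
    · simp [hc0]
    · have h := hrel n hn
      have h0 : (0:ℝ) ≤ (2 * π / T) * ‖fourierCoeff F n‖ := by positivity
      calc (2 * π / T) ^ 2 * ‖fourierCoeff F n‖ ^ 2
          = ((2 * π / T) * ‖fourierCoeff F n‖) ^ 2 := by ring
        _ ≤ ‖fourierCoeff F' n‖ ^ 2 := by nlinarith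
  have hsum : Summable fun n : ℤ => ‖fourierCoeff F n‖ ^ 2 :=
    my_summable_sq_fourierCoeff ⟨F, hFc⟩
  have hsum' : Summable fun n : ℤ => ‖fourierCoeff F' n‖ ^ 2 :=
    my_summable_sq_fourierCoeff ⟨F', hF'c⟩
  have hP : ∑' n : ℤ, ‖fourierCoeff F n‖ ^ 2
      = ∫ x : AddCircle T, ‖F x‖ ^ 2 ∂AddCircle.haarAddCircle := my_parseval ⟨F, hFc⟩
  have hP' : ∑' n : ℤ, ‖fourierCoeff F' n‖ ^ 2
      = ∫ x : AddCircle T, ‖F' x‖ ^ 2 ∂AddCircle.haarAddCircle := my_parseval ⟨F', hF'c⟩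
  rw [hnormint u F hcoe, hnormint u' F' hcoe', ← hP, ← hP']
  rw [← mul_assoc, mul_comm ((2 * π / T) ^ 2) T, mul_assoc, ← tsum_mul_left]
  exact mul_le_mul_of_nonneg_left (Summable.tsum_le_tsum hsq (hsum.mul_left _) hsum') hT.le



/-- Matrix version of the period bound (Proposition 2 of the paper): if
`C gᵀQg − (Dg·f)ᵀQ(Dg·f) + DV·f ≥ 0` on `Ω` for a positive definite matrix `Q`, then
every `T`-periodic solution of `x' = f(x)` in `Ω` along which `g` has zero mean but is
not identically zero satisfies `T ≥ 2π/√C`. -/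
theorem sos_period_bound {n m : ℕ} (Ω : Set (EuclideanSpace ℝ (Fin n))) (hΩ : IsOpen Ω)
    (f : EuclideanSpace ℝ (Fin n) → EuclideanSpace ℝ (Fin n)) (hf : ContDiffOn ℝ 1 f Ω)
    (g : EuclideanSpace ℝ (Fin n) → (Fin m → ℝ))
    (hg : ∀ i, ContDiffOn ℝ 1 (fun y => g y i) Ω)
    (Q : Matrix (Fin m) (Fin m) ℝ) (hQ : Q.PosDef)
    (V : EuclideanSpace ℝ (Fin n) → ℝ) (hV : ContDiffOn ℝ 1 V Ω)
    (C : ℝ) (hC : 0 < C)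
    (hineq : ∀ x ∈ Ω,
      C * (g x ⬝ᵥ Q.mulVec (g x))
        - ((fun i => fderiv ℝ (fun y => g y i) x (f x)) ⬝ᵥ
            Q.mulVec (fun i => fderiv ℝ (fun y => g y i) x (f x)))
        + fderiv ℝ V x (f x) ≥ 0)
    (x : ℝ → EuclideanSpace ℝ (Fin n)) (hxΩ : ∀ t, x t ∈ Ω)
    (hsol : ∀ t, HasDerivAt x (f (x t)) t)
    (T : ℝ) (hT : 0 < T) (hper : ∀ t, x (t + T) = x t)
    (hmean : ∀ i, (∫ t in (0:ℝ)..T, g (x t) i) = 0)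
    (hnonzero : (∫ t in (0:ℝ)..T, ∑ i, (g (x t) i) ^ 2) ≠ 0) :
    2 * π / Real.sqrt C ≤ T := by
  classical
  have hxcont : Continuous x := continuous_iff_continuousAt.mpr fun t => (hsol t).continuousAt
  have hfx : Continuous fun t => f (x t) :=
    (hf.continuousOn).comp_continuous hxcont hxΩ
  set D : ℝ → Fin m → ℝ := fun t i => fderiv ℝ (fun y => g y i) (x t) (f (x t)) with hD
  have hgd : ∀ i t, HasDerivAt (fun t => g (x t) i) (D t i) t := by
    intro i t
    have hdiff : DifferentiableAt ℝ (fun y => g y i) (x t) :=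
      ((hg i).differentiableOn one_ne_zero).differentiableAt (hΩ.mem_nhds (hxΩ t))
    exact hdiff.hasFDerivAt.comp_hasDerivAt t (hsol t)
  have hgc : ∀ i, Continuous fun t => g (x t) i := fun i =>
    continuous_iff_continuousAt.mpr fun t => (hgd i t).continuousAt
  have hDc : ∀ i, Continuous fun t => D t i := by
    intro i
    have h1 : Continuous fun t => fderiv ℝ (fun y => g y i) (x t) :=
      ((hg i).continuousOn_fderiv_of_isOpen hΩ le_rfl).comp_continuous hxcont hxΩ
    exact h1.clm_apply hfx
  set W : ℝ → ℝ := fun t => fderiv ℝ V (x t) (f (x t)) with hW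
  have hVd : ∀ t, HasDerivAt (fun t => V (x t)) (W t) t := by
    intro t
    have hdiff : DifferentiableAt ℝ V (x t) :=
      (hV.differentiableOn one_ne_zero).differentiableAt (hΩ.mem_nhds (hxΩ t))
    exact hdiff.hasFDerivAt.comp_hasDerivAt t (hsol t)
  have hWc : Continuous W :=
    ((hV.continuousOn_fderiv_of_isOpen hΩ le_rfl).comp_continuous hxcont hxΩ).clm_apply hfx
  have hx0T : x T = x 0 := by simpa using hper 0
  have hWint : ∫ t in (0:ℝ)..T, W t = 0 := by
    rw [intervalIntegral.integral_eq_sub_of_hasDerivAt (fun t _ => hVd t)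
      (hWc.intervalIntegrable 0 T), hx0T, sub_self]
  set q : ℝ → ℝ := fun t => g (x t) ⬝ᵥ Q.mulVec (g (x t)) with hq
  set r : ℝ → ℝ := fun t => D t ⬝ᵥ Q.mulVec (D t) with hr
  have hqc : Continuous q := by
    simp only [hq, dotProduct, Matrix.mulVec]
    exact continuous_finset_sum _ fun i _ => (hgc i).mul
      (continuous_finset_sum _ fun j _ => continuous_const.mul (hgc j))
  have hrc : Continuous r := by
    simp only [hr, dotProduct, Matrix.mulVec]
    exact continuous_finset_sum _ fun i _ => (hDc i).mul
      (continuous_finset_sum _ fun j _ => continuous_const.mul (hDc j))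
  have hkey : ∀ t, 0 ≤ C * q t - r t + W t := fun t => hineq (x t) (hxΩ t)
  have hint : 0 ≤ ∫ t in (0:ℝ)..T, (C * q t - r t + W t) :=
    intervalIntegral.integral_nonneg hT.le fun t _ => hkey t
  have hsplit : ∫ t in (0:ℝ)..T, (C * q t - r t + W t)
      = C * (∫ t in (0:ℝ)..T, q t) - (∫ t in (0:ℝ)..T, r t) + ∫ t in (0:ℝ)..T, W t := by
    rw [intervalIntegral.integral_add ((show Continuous (fun t => C * q t - r t) from ((continuous_const (y := C)).mul hqc).sub hrc).intervalIntegrable 0 T)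
      (hWc.intervalIntegrable 0 T),
      intervalIntegral.integral_sub ((show Continuous (fun t => C * q t) from (continuous_const (y := C)).mul hqc).intervalIntegrable 0 T)
      (hrc.intervalIntegrable 0 T), intervalIntegral.integral_const_mul]
  have hCqr : (∫ t in (0:ℝ)..T, r t) ≤ C * ∫ t in (0:ℝ)..T, q t := by
    rw [hsplit, hWint] at hint; linarith
  -- Cholesky factor
  have hQs : Q.PosSemidef := hQ.posSemidef
  set U : Matrix (Fin m) (Fin m) ℝ := CFC.sqrt Q with hU
  have hUsym : Uᵀ = U := by
    have h1 := (CFC.sqrt_nonneg Q).posSemidef.isHermitian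
    rwa [Matrix.IsHermitian, Matrix.conjTranspose_eq_transpose_of_trivial] at h1
  have hquad : ∀ v : Fin m → ℝ, v ⬝ᵥ Q.mulVec v = ∑ j, (U.mulVec v j) ^ 2 := by
    intro v
    have hQU : Q = U * U := (CFC.sqrt_mul_sqrt_self Q hQs.nonneg).symm
    rw [hQU, ← Matrix.mulVec_mulVec, dotProduct_mulVec,
      ← (Matrix.mulVec_transpose U v), hUsym]
    simp [dotProduct, sq]
  have hqnn : ∀ t, 0 ≤ q t := by
    intro t
    have he : q t = ∑ j, (U.mulVec (g (x t)) j) ^ 2 := hquad _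
    rw [he]; positivity
  -- positivity of ∫ q
  have hex : ∃ t₀ ∈ Set.Ico (0:ℝ) T, g (x t₀) ≠ 0 := by
    by_contra hcon
    push_neg at hcon
    apply hnonzero
    have hzero : ∀ t ∈ Set.uIcc (0:ℝ) T, (∑ i, (g (x t) i) ^ 2) = (fun _ : ℝ => (0:ℝ)) t := by
      intro t ht
      rw [Set.uIcc_of_le hT.le] at ht
      rcases lt_or_eq_of_le ht.2 with h2 | h2
      · have := hcon t ⟨ht.1, h2⟩
        simp [this]
      · subst h2
        have hTx : g (x t) = g (x 0) := by rw [hx0T]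
        have := hcon 0 ⟨le_rfl, hT⟩
        rw [hTx, this]
        simp
    rw [intervalIntegral.integral_congr hzero, intervalIntegral.integral_const, smul_zero]
  obtain ⟨t₀, ht₀, hht₀⟩ := hex
  have hqt₀ : 0 < q t₀ := by
    have h1 := hQ.dotProduct_mulVec_pos hht₀
    simpa [hq] using h1
  have hIq : 0 < ∫ t in (0:ℝ)..T, q t := by
    rw [intervalIntegral.integral_pos_iff_support_of_nonneg_ae'
      (Filter.Eventually.of_forall hqnn) (hqc.intervalIntegrable 0 T)]
    refine ⟨hT, ?_⟩
    have hopen : IsOpen (Function.support q) := by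
      rw [Function.support_eq_preimage]
      exact (isOpen_compl_singleton).preimage hqc
    obtain ⟨δ, hδ, hball⟩ := Metric.isOpen_iff.mp hopen t₀ (by
      simp only [Function.mem_support]; exact hqt₀.ne')
    have hsub : Set.Ioo t₀ (min (t₀ + δ) T) ⊆ Function.support q ∩ Set.Ioc 0 T := by
      intro s hs
      have hs1 := hs.1
      have hs2 := hs.2
      have hlt1 : s < t₀ + δ := lt_of_lt_of_le hs2 (min_le_left _ _)
      have hlt2 : s ≤ T := le_of_lt (lt_of_lt_of_le hs2 (min_le_right _ _))
      refine ⟨hball ?_, lt_of_le_of_lt ht₀.1 hs1, hlt2⟩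
      rw [Metric.mem_ball, Real.dist_eq, abs_lt]
      constructor <;> linarith
    refine lt_of_lt_of_le ?_ (measure_mono hsub)
    rw [Real.volume_Ioo]
    refine ENNReal.ofReal_pos.mpr ?_
    have : t₀ < min (t₀ + δ) T := lt_min (by linarith) ht₀.2
    linarith
  -- Wirtinger for each component of U ∘ g ∘ x
  have hwder : ∀ j t, HasDerivAt (fun t => U.mulVec (g (x t)) j) (U.mulVec (D t) j) t := by
    intro j t
    simp only [Matrix.mulVec, dotProduct]
    exact HasDerivAt.fun_sum fun i _ => (hgd i t).const_mul (U j i)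
  have hwc : ∀ j, Continuous fun t => U.mulVec (g (x t)) j := fun j =>
    continuous_iff_continuousAt.mpr fun t => (hwder j t).continuousAt
  have hw'c : ∀ j, Continuous fun t => U.mulVec (D t) j := by
    intro j
    simp only [Matrix.mulVec, dotProduct]
    exact continuous_finset_sum _ fun i _ => continuous_const.mul (hDc i)
  have hwmean : ∀ j, (∫ t in (0:ℝ)..T, U.mulVec (g (x t)) j) = 0 := by
    intro j
    simp only [Matrix.mulVec, dotProduct]
    rw [intervalIntegral.integral_finset_sum
      (fun i _ => ((show Continuous (fun t => U j i * g (x t) i) from continuous_const.mul (hgc i)).intervalIntegrable 0 T))]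
    refine Finset.sum_eq_zero fun i _ => ?_
    rw [intervalIntegral.integral_const_mul, hmean i, mul_zero]
  have hwper : ∀ j t, U.mulVec (g (x (t + T))) j = U.mulVec (g (x t)) j := by
    intro j t; rw [hper t]
  have hwirt : ∀ j, (2 * π / T) ^ 2 * (∫ t in (0:ℝ)..T, (U.mulVec (g (x t)) j) ^ 2)
      ≤ ∫ t in (0:ℝ)..T, (U.mulVec (D t) j) ^ 2 := by
    intro j
    have hW := wirtinger_aux hT (fun t => ((U.mulVec (g (x t)) j : ℝ) : ℂ))
      (fun t => ((U.mulVec (D t) j : ℝ) : ℂ))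
      (fun t => (hwder j t).ofReal_comp)
      (Complex.continuous_ofReal.comp (hw'c j))
      (fun t => congrArg Complex.ofReal (hwper j t))
      (by rw [intervalIntegral.integral_ofReal, hwmean j, Complex.ofReal_zero])
    simpa only [Complex.norm_real, Real.norm_eq_abs, _root_.sq_abs] using hW
  have hqeq : (∫ t in (0:ℝ)..T, q t) = ∑ j, ∫ t in (0:ℝ)..T, (U.mulVec (g (x t)) j) ^ 2 := by
    rw [show q = fun t => ∑ j, (U.mulVec (g (x t)) j) ^ 2 from funext fun t => hquad _]
    exact intervalIntegral.integral_finset_sum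
      (fun j _ => (((hwc j).pow 2).intervalIntegrable 0 T))
  have hreq : (∫ t in (0:ℝ)..T, r t) = ∑ j, ∫ t in (0:ℝ)..T, (U.mulVec (D t) j) ^ 2 := by
    rw [show r = fun t => ∑ j, (U.mulVec (D t) j) ^ 2 from funext fun t => hquad _]
    exact intervalIntegral.integral_finset_sum
      (fun j _ => (((hw'c j).pow 2).intervalIntegrable 0 T))
  have hmain : (2 * π / T) ^ 2 * (∫ t in (0:ℝ)..T, q t) ≤ C * ∫ t in (0:ℝ)..T, q t := by
    calc (2 * π / T) ^ 2 * (∫ t in (0:ℝ)..T, q t)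
        = ∑ j, (2 * π / T) ^ 2 * ∫ t in (0:ℝ)..T, (U.mulVec (g (x t)) j) ^ 2 := by
          rw [hqeq, Finset.mul_sum]
      _ ≤ ∑ j, ∫ t in (0:ℝ)..T, (U.mulVec (D t) j) ^ 2 :=
          Finset.sum_le_sum fun j _ => hwirt j
      _ = ∫ t in (0:ℝ)..T, r t := hreq.symm
      _ ≤ C * ∫ t in (0:ℝ)..T, q t := hCqr
  have hfin : (2 * π / T) ^ 2 ≤ C := by
    have := (mul_le_mul_iff_of_pos_right hIq).mp hmain
    exact this
  have hsqrt : 2 * π / T ≤ Real.sqrt C :=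
    (Real.le_sqrt (by positivity) hC.le).mpr hfin
  rw [div_le_iff₀ (Real.sqrt_pos.mpr hC)]
  rw [div_le_iff₀ hT] at hsqrt
  nlinarith [Real.sqrt_pos.mpr hC, Real.pi_pos]
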